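/- Let k ≥ 2, let c₀, c₁, …, c_k ∈ ℝ with c_i < 0 for one fixed index i ∈ {0,…,k}, c_j > 0 for all j ≠ i, and c_i ≥ −(∑_{j≠i} 1/c_j)^{-1}. Then for every vector (x₀, x₁, …, x_k) ∈ ℝ^{k+1} with x₀ + x₁ + ⋯ + x_k = 0, one has ∑_{ℓ=0}^k c_ℓ x_ℓ² ≥ 0. -/
import Mathlib


open Finset

/-- If `c_i < 0` for one index, `c_j > 0` for all `j ≠ i` and
`c_i ≥ −(∑_{j≠i} 1/c_j)⁻¹`, then `∑ c_ℓ x_ℓ² ≥ 0` whenever `∑ x_ℓ = 0`. -/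
theorem sum_c_sq_nonneg_on_hyperplane
    (k : ℕ) (hk : 2 ≤ k) (c : Fin (k + 1) → ℝ) (i : Fin (k + 1))
    (hci : c i < 0) (hcj : ∀ j, j ≠ i → 0 < c j)
    (hineq : -(∑ j ∈ univ.erase i, (c j)⁻¹)⁻¹ ≤ c i) :
    ∀ x : Fin (k + 1) → ℝ, ∑ ℓ, x ℓ = 0 → 0 ≤ ∑ ℓ, c ℓ * x ℓ ^ 2 := by
  intro x hx
  set T := (univ : Finset (Fin (k + 1))).erase i with hT
  have hS : 0 < ∑ j ∈ T, (c j)⁻¹ := by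
    apply Finset.sum_pos
    · intro j hj
      exact inv_pos.2 (hcj j (Finset.ne_of_mem_erase hj))
    · rw [← Finset.card_pos, Finset.card_erase_of_mem (Finset.mem_univ i),
        Finset.card_univ, Fintype.card_fin]
      omega
  set S := ∑ j ∈ T, (c j)⁻¹ with hSdef
  set Q := ∑ j ∈ T, c j * x j ^ 2 with hQdef
  have hxi : x i = -∑ j ∈ T, x j := by
    have := Finset.sum_erase_add univ x (Finset.mem_univ i)
    rw [hx] at this
    linarith [this]
  -- Cauchy–Schwarz
  have hCS := Finset.sum_mul_sq_le_sq_mul_sq T (fun j => Real.sqrt (c j)⁻¹)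
    (fun j => Real.sqrt (c j) * x j)
  have h1 : ∑ j ∈ T, (Real.sqrt (c j)⁻¹ * (Real.sqrt (c j) * x j)) = ∑ j ∈ T, x j := by
    apply Finset.sum_congr rfl
    intro j hj
    have hc : 0 < c j := hcj j (Finset.ne_of_mem_erase hj)
    rw [← mul_assoc, ← Real.sqrt_mul (by positivity), inv_mul_cancel₀ hc.ne', Real.sqrt_one,
      one_mul]
  have h2 : ∑ j ∈ T, (Real.sqrt (c j)⁻¹) ^ 2 = S := by
    apply Finset.sum_congr rfl
    intro j hj
    have hc : 0 < c j := hcj j (Finset.ne_of_mem_erase hj)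
    rw [Real.sq_sqrt (by positivity)]
  have h3 : ∑ j ∈ T, (Real.sqrt (c j) * x j) ^ 2 = Q := by
    apply Finset.sum_congr rfl
    intro j hj
    have hc : 0 < c j := hcj j (Finset.ne_of_mem_erase hj)
    rw [mul_pow, Real.sq_sqrt hc.le]
  rw [h1, h2, h3] at hCS
  have hkey : x i ^ 2 ≤ S * Q := by rw [hxi]; simpa using hCS
  have hsplit : ∑ ℓ, c ℓ * x ℓ ^ 2 = Q + c i * x i ^ 2 :=
    (Finset.sum_erase_add univ _ (Finset.mem_univ i)).symm
  rw [hsplit]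
  have hSinv : 0 < S⁻¹ := inv_pos.2 hS
  have h4 : -S⁻¹ * x i ^ 2 ≤ c i * x i ^ 2 := by
    apply mul_le_mul_of_nonneg_right hineq (sq_nonneg _)
  have h5 : S⁻¹ * x i ^ 2 ≤ Q := by
    calc S⁻¹ * x i ^ 2 ≤ S⁻¹ * (S * Q) := mul_le_mul_of_nonneg_left hkey hSinv.le
    _ = Q := by field_simp
  linarith
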